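/- Let $f' : \mathbb{R} \to \mathbb{R}$ be continuous with $0 < \delta_0 \le f'(x) \le c_0$, let $G(x) = \int_0^x f'(v)\,dv$, and let $B \subset \mathbb{R}$ be a measurable set of finite Lebesgue measure $\lambda(B)$. Then for all $x \in \mathbb{R}$, $\left| f'(x) \int_0^x \frac{\chi_B(G(u))}{f'(u)}\,du \right| \le \frac{c_0}{\delta_0^2} \lambda(B)$. -/

import Mathlib

open MeasureTheory

/-- If `f'` is continuous with `0 < δ₀ ≤ f' ≤ c₀`, `G(x) = ∫₀ˣ f'`, and `B` is a
measurable set of finite Lebesgue measure, then for all `x`,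
`|f'(x) ∫₀ˣ χ_B(G(u))/f'(u) du| ≤ (c₀/δ₀²) λ(B)`. -/
theorem stmt4 (f' : ℝ → ℝ) (δ₀ c₀ : ℝ) (hδ : 0 < δ₀)
    (hcont : Continuous f')
    (hbound : ∀ x, δ₀ ≤ f' x ∧ f' x ≤ c₀)
    (G : ℝ → ℝ) (hG : ∀ x, G x = ∫ v in (0:ℝ)..x, f' v)
    (B : Set ℝ) (hB : MeasurableSet B) (hBfin : volume B < ⊤) :
    ∀ x : ℝ,
      |f' x * ∫ u in (0:ℝ)..x, Set.indicator B (fun _ => (1:ℝ)) (G u) / f' u|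
        ≤ (c₀ / δ₀ ^ 2) * (volume B).toReal := by
  intro x
  have hf'pos : ∀ u, 0 < f' u := fun u => hδ.trans_le (hbound u).1
  have hGeq : G = fun y => ∫ v in (0:ℝ)..y, f' v := funext hG
  have hderiv : ∀ u, HasDerivAt G (f' u) u := by
    intro u
    rw [hGeq]
    exact intervalIntegral.integral_hasDerivAt_right (hcont.intervalIntegrable _ _)
      (hcont.stronglyMeasurableAtFilter _ _) hcont.continuousAt
  have hGcont : Continuous G := by
    rw [continuous_iff_continuousAt]; exact fun u => (hderiv u).continuousAt
  have hmono : StrictMono G := by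
    apply strictMono_of_deriv_pos
    intro u; rw [(hderiv u).deriv]; exact hf'pos u
  set g : ℝ → ℝ := Set.indicator B (fun _ => (1:ℝ)) with hg
  have hgnonneg : ∀ v, 0 ≤ g v := fun v => Set.indicator_nonneg (fun _ _ => zero_le_one) v
  have hgle : ∀ v, g v ≤ 1 := fun v => Set.indicator_le_self' (fun _ _ => zero_le_one) v
  set S : Set ℝ := Set.uIoc 0 x with hS
  have hSmeas : MeasurableSet S := measurableSet_uIoc
  have hSfin : volume S < ⊤ := measure_Ioc_lt_top
  have hmeasg : Measurable fun u => g (G u) := by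
    have : Measurable g := measurable_const.indicator hB
    exact this.comp hGcont.measurable
  -- change of variables
  have hcov : ∫ u in S, |f' u| • g (G u) = ∫ v in G '' S, g v :=
    (integral_image_eq_integral_abs_deriv_smul hSmeas
      (fun u _ => (hderiv u).hasDerivWithinAt) (hmono.injective.injOn) g).symm
  have himg : ∫ v in G '' S, g v ≤ (volume B).toReal := by
    rw [hg, setIntegral_indicator hB, setIntegral_const, smul_eq_mul, mul_one]
    exact ENNReal.toReal_mono hBfin.ne (measure_mono Set.inter_subset_right)
  -- integrabilities
  have hint1 : IntegrableOn (fun u => g (G u) / f' u) S volume := by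
    apply Integrable.mono' (integrableOn_const (C := 1 / δ₀) hSfin.ne)
      ((hmeasg.div hcont.measurable).aestronglyMeasurable)
    · filter_upwards with u
      simp only [Pi.div_apply]
      rw [Real.norm_eq_abs, abs_div, abs_of_nonneg (hgnonneg _), abs_of_pos (hf'pos u)]
      exact div_le_div₀ zero_le_one (hgle (G u)) hδ (hbound u).1
  have hint2 : IntegrableOn (fun u => (δ₀ ^ 2)⁻¹ * (f' u * g (G u))) S volume := by
    apply Integrable.mono' (integrableOn_const (C := (δ₀ ^ 2)⁻¹ * c₀) hSfin.ne)
      ((measurable_const.mul (hcont.measurable.mul hmeasg)).aestronglyMeasurable)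
    · filter_upwards with u
      simp only [Pi.mul_apply]
      rw [Real.norm_eq_abs, abs_mul, abs_mul, abs_of_pos (hf'pos u),
        abs_of_nonneg (hgnonneg _), abs_of_pos (inv_pos.mpr (pow_pos hδ 2))]
      have h1 : f' u * g (G u) ≤ c₀ * 1 :=
        mul_le_mul (hbound u).2 (hgle _) (hgnonneg _) (le_trans hδ.le ((hbound u).1.trans (hbound u).2))
      calc (δ₀ ^ 2)⁻¹ * (f' u * g (G u)) ≤ (δ₀ ^ 2)⁻¹ * (c₀ * 1) :=
            mul_le_mul_of_nonneg_left h1 (by positivity)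
        _ = (δ₀ ^ 2)⁻¹ * c₀ := by ring
  -- pointwise bound
  have hpt : ∀ u ∈ S, ‖g (G u) / f' u‖ ≤ (δ₀ ^ 2)⁻¹ * (f' u * g (G u)) := by
    intro u _
    rw [Real.norm_eq_abs, abs_div, abs_of_nonneg (hgnonneg _), abs_of_pos (hf'pos u),
      div_le_iff₀ (hf'pos u)]
    have ha := hgnonneg (G u)
    have hp := (hbound u).1
    have h2 : δ₀ ^ 2 ≤ f' u * f' u := by nlinarith
    have h3 : g (G u) * δ₀ ^ 2 ≤ g (G u) * (f' u * f' u) :=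
      mul_le_mul_of_nonneg_left h2 ha
    have hδ2 : (0:ℝ) < δ₀ ^ 2 := by positivity
    have heq : (δ₀ ^ 2)⁻¹ * (f' u * g (G u)) * f' u = g (G u) * (f' u * f' u) / δ₀ ^ 2 := by
      ring
    rw [heq, le_div_iff₀ hδ2]
    exact h3
  -- main chain
  have habs : |∫ u in (0:ℝ)..x, g (G u) / f' u| ≤ (δ₀ ^ 2)⁻¹ * (volume B).toReal := by
    calc |∫ u in (0:ℝ)..x, g (G u) / f' u|
        = ‖∫ u in (0:ℝ)..x, g (G u) / f' u‖ := (Real.norm_eq_abs _).symm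
      _ ≤ ∫ u in S, ‖g (G u) / f' u‖ :=
          intervalIntegral.norm_integral_le_integral_norm_uIoc
      _ ≤ ∫ u in S, (δ₀ ^ 2)⁻¹ * (f' u * g (G u)) :=
          setIntegral_mono_on hint1.norm hint2 hSmeas hpt
      _ = (δ₀ ^ 2)⁻¹ * ∫ u in S, f' u * g (G u) := integral_const_mul _ _
      _ = (δ₀ ^ 2)⁻¹ * ∫ u in S, |f' u| • g (G u) := by
          congr 1; apply setIntegral_congr_fun hSmeas
          intro u _; simp only [smul_eq_mul, abs_of_pos (hf'pos u)]
      _ = (δ₀ ^ 2)⁻¹ * ∫ v in G '' S, g v := by rw [hcov]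
      _ ≤ (δ₀ ^ 2)⁻¹ * (volume B).toReal :=
          mul_le_mul_of_nonneg_left himg (by positivity)
  have hc₀ : 0 < c₀ := lt_of_lt_of_le (hf'pos x) (hbound x).2
  calc |f' x * ∫ u in (0:ℝ)..x, g (G u) / f' u|
      = |f' x| * |∫ u in (0:ℝ)..x, g (G u) / f' u| := abs_mul _ _
    _ ≤ c₀ * ((δ₀ ^ 2)⁻¹ * (volume B).toReal) := by
        apply mul_le_mul (by rw [abs_of_pos (hf'pos x)]; exact (hbound x).2) habs
          (abs_nonneg _) hc₀.le
    _ = (c₀ / δ₀ ^ 2) * (volume B).toReal := by ring
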